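/- For each integer 1 ≤ k ≤ 7, sup_{p ∈ (0,1)} L(k,p) = 1/k, and this supremum is not attained (L(k,p) < 1/k for all p ∈ (0,1)). -/

import Mathlib

open Real Set Filter

/-- Expected number of tests per person in the Dorfman two-stage procedure
with group size `k` and prevalence `p`: `E 1 p = 1` and
`E k p = 1 - (1-p)^k + 1/k` for `k ≥ 2`. -/
noncomputable def E (k : ℕ) (p : ℝ) : ℝ :=
  if k = 1 then 1 else 1 - (1 - p) ^ k + 1 / k

/-- Optimal expected number of tests per person: infimum over group sizes `k ≥ 1`. -/
noncomputable def Estar (p : ℝ) : ℝ := ⨅ k : ℕ+, E k p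

/-- Loss of using group size `k` at prevalence `p`. -/
noncomputable def L (k : ℕ) (p : ℝ) : ℝ := E k p - Estar p
lemma E_one (p : ℝ) : E 1 p = 1 := by simp [E]
lemma E_ne {k : ℕ} (hk : k ≠ 1) (p : ℝ) : E k p = 1 - (1 - p) ^ k + 1 / k := if_neg hk

lemma poly2 {q : ℝ} (h0 : 0 ≤ q) (h1 : q ≤ 1) : q^2 - q^7 < 1/2 := by
  nlinarith [sq_nonneg (q - 3/4), sq_nonneg (q^2 - 11/20), mul_nonneg (mul_nonneg h0 h0) h0, sq_nonneg (q^3 - q^2), mul_nonneg (sub_nonneg.2 h1) (sq_nonneg (q - 3/4)), mul_nonneg (mul_nonneg h0 h0) (sq_nonneg (q-3/4)), mul_nonneg (mul_nonneg (mul_nonneg h0 h0) h0) (sq_nonneg (q-3/4)), mul_nonneg (sub_nonneg.2 h1) (sq_nonneg (q^2 - 11/20))]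
lemma poly3 {q : ℝ} (h0 : 0 ≤ q) (h1 : q ≤ 1) : q^3 - q^7 < 1/3 := by
  nlinarith [pow_nonneg h0 3, pow_nonneg h0 2, sq_nonneg (q - 4/5), sq_nonneg (q^2 - q), sq_nonneg (q^3 - q), sq_nonneg q]
lemma poly4 {q : ℝ} (h0 : 0 ≤ q) (h1 : q ≤ 1) : q^4 - q^7 < 1/4 := by
  nlinarith [pow_nonneg h0 3, pow_nonneg h0 2, sq_nonneg (q - 4/5), sq_nonneg (q^2 - q), sq_nonneg (q^3 - q), sq_nonneg q]
lemma poly5 {q : ℝ} (h0 : 0 ≤ q) (h1 : q ≤ 1) : q^5 - q^7 < 1/5 := by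
  nlinarith [pow_nonneg h0 3, pow_nonneg h0 2, sq_nonneg (q - 4/5), sq_nonneg (q^2 - q), sq_nonneg (q^3 - q), sq_nonneg q]
lemma poly6 {q : ℝ} (h0 : 0 ≤ q) (h1 : q ≤ 1) : q^6 - q^7 < 1/6 := by
  nlinarith [pow_nonneg h0 3, sq_nonneg (q - 6/7), sq_nonneg (q^3 - q), sq_nonneg q]

/-- pointwise strict lower bound on E j p -/
lemma E_gt_aux {p : ℝ} (hp0 : 0 < p) (hp1 : p < 1) {k : ℕ} (hk2 : 2 ≤ k) (hk7 : k ≤ 7)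
    {j : ℕ} (hj : 1 ≤ j) : 1 - (1 - p) ^ k < E j p := by
  have hq0 : (0:ℝ) < 1 - p := by linarith
  have hq1 : (1:ℝ) - p < 1 := by linarith
  rcases eq_or_lt_of_le hj with h1 | h2
  · rw [← h1, E_one]
    have : 0 < (1 - p) ^ k := pow_pos hq0 k
    linarith
  · have hj2 : 2 ≤ j := h2
    have hjR : (0:ℝ) < (j:ℝ) := by positivity
    rw [E_ne (by omega)]
    have key : (1-p) ^ j - (1-p) ^ k < 1 / (j:ℝ) := by
      rcases le_or_gt k j with hkj | hjk
      · have h1 : (1-p) ^ j ≤ (1-p) ^ k := pow_le_pow_of_le_one hq0.le hq1.le hkj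
        have : 0 < 1 / (j:ℝ) := by positivity
        linarith
      · have h7 : (1-p) ^ 7 ≤ (1-p) ^ k := pow_le_pow_of_le_one hq0.le hq1.le hk7
        have hj6 : j ≤ 6 := by omega
        have hlt : (1-p) ^ j - (1-p) ^ 7 < 1 / (j:ℝ) := by
          interval_cases j
          · exact_mod_cast poly2 hq0.le hq1.le
          · exact_mod_cast poly3 hq0.le hq1.le
          · exact_mod_cast poly4 hq0.le hq1.le
          · exact_mod_cast poly5 hq0.le hq1.le
          · exact_mod_cast poly6 hq0.le hq1.le
        linarith
    linarith

lemma E_nonneg {p : ℝ} (hp0 : 0 < p) (hp1 : p < 1) (j : ℕ) : 0 ≤ E j p := by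
  rcases eq_or_ne j 1 with h | h
  · simp [h, E_one]
  · rw [E_ne h]
    have h1 : (1 - p) ^ j ≤ 1 := pow_le_one₀ (by linarith) (by linarith)
    have h2 : (0:ℝ) ≤ 1 / (j:ℝ) := by positivity
    linarith

lemma bdd_below_E {p : ℝ} (hp0 : 0 < p) (hp1 : p < 1) :
    BddBelow (Set.range fun j : ℕ+ => E j p) := by
  refine ⟨0, ?_⟩
  rintro _ ⟨j, rfl⟩
  exact E_nonneg hp0 hp1 j

lemma estar_le {p : ℝ} (hp0 : 0 < p) (hp1 : p < 1) (j : ℕ+) : Estar p ≤ E j p :=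
  ciInf_le (bdd_below_E hp0 hp1) j

lemma estar_gt {p : ℝ} (hp0 : 0 < p) (hp1 : p < 1) {k : ℕ} (hk2 : 2 ≤ k) (hk7 : k ≤ 7) :
    1 - (1 - p) ^ k < Estar p := by
  have hq0 : (0:ℝ) < 1 - p := by linarith
  have hq1 : (1:ℝ) - p < 1 := by linarith
  have hnorm : ‖(1:ℝ) - p‖ < 1 := by rw [Real.norm_eq_abs, abs_of_pos hq0]; exact hq1
  have hs : Summable (fun n : ℕ => (n:ℝ) ^ 1 * (1 - p) ^ n) :=
    summable_pow_mul_geometric_of_norm_lt_one 1 hnorm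
  have hev : ∀ᶠ n : ℕ in atTop, (n:ℝ) ^ 1 * (1 - p) ^ n < 1 :=
    hs.tendsto_atTop_zero.eventually (gt_mem_nhds one_pos)
  obtain ⟨N, hN⟩ := eventually_atTop.mp hev
  set M := max N 2 with hM
  have hne : (Finset.Icc 1 M).Nonempty := ⟨1, Finset.mem_Icc.2 ⟨le_refl 1, by omega⟩⟩
  set d := (Finset.Icc 1 M).inf' hne (fun j => E j p - (1 - (1 - p) ^ k)) with hdd
  have hd : 0 < d := by
    rw [hdd, Finset.lt_inf'_iff]
    intro j hj
    have hj1 : 1 ≤ j := (Finset.mem_Icc.1 hj).1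
    have := E_gt_aux hp0 hp1 hk2 hk7 hj1
    linarith
  set δ := min ((1 - p) ^ k) d with hδd
  have hδ : 0 < δ := lt_min (pow_pos hq0 k) hd
  have hle : ∀ j : ℕ+, 1 - (1 - p) ^ k + δ ≤ E j p := by
    intro j
    rcases le_or_gt (j:ℕ) M with h | h
    · have hmem : (j:ℕ) ∈ Finset.Icc 1 M := Finset.mem_Icc.2 ⟨j.one_le, h⟩
      have h1 : d ≤ E j p - (1 - (1 - p) ^ k) :=
        Finset.inf'_le (fun j => E j p - (1 - (1 - p) ^ k)) hmem
      have h2 : δ ≤ d := min_le_right _ _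
      linarith
    · have hjN : N ≤ (j:ℕ) := le_trans (le_max_left _ _) h.le
      have hj2 : 2 ≤ (j:ℕ) := le_trans (le_max_right _ _) h.le
      have h1 := hN (j:ℕ) hjN
      rw [pow_one] at h1
      have hjR : (0:ℝ) < ((j:ℕ):ℝ) := by positivity
      have hq : (1 - p) ^ (j:ℕ) < 1 / ((j:ℕ):ℝ) := by
        rw [lt_div_iff₀ hjR]
        nlinarith
      rw [E_ne (by omega)]
      have hδk : δ ≤ (1 - p) ^ k := min_le_left _ _
      have hk1 : (1 - p) ^ k ≤ 1 := pow_le_one₀ hq0.le hq1.le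
      linarith
  have hfin : 1 - (1 - p) ^ k + δ ≤ Estar p := le_ciInf hle
  linarith


theorem sup_loss_small_k (k : ℕ) (hk1 : 1 ≤ k) (hk7 : k ≤ 7) :
    sSup (L k '' Set.Ioo (0:ℝ) 1) = 1 / k ∧
    ∀ p ∈ Set.Ioo (0:ℝ) 1, L k p < 1 / k := by
  have key : ∀ p ∈ Set.Ioo (0:ℝ) 1, L k p < 1 / k := by
    rintro p ⟨hp0, hp1⟩
    rcases eq_or_lt_of_le hk1 with rfl | h2
    · have h := estar_gt hp0 hp1 (le_refl 2) (by norm_num)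
      have hq : (1 - p) ^ 2 < 1 := by nlinarith
      rw [L, E_one]
      norm_num
      linarith
    · have hk2 : 2 ≤ k := h2
      rw [L, E_ne (by omega)]
      have := estar_gt hp0 hp1 hk2 hk7
      linarith
  refine ⟨?_, key⟩
  have hbdd : BddAbove (L k '' Set.Ioo (0:ℝ) 1) :=
    ⟨1 / k, by rintro _ ⟨p, hp, rfl⟩; exact (key p hp).le⟩
  have hne : (L k '' Set.Ioo (0:ℝ) 1).Nonempty :=
    ⟨L k (1/2), ⟨1/2, by norm_num, rfl⟩⟩
  refine le_antisymm (csSup_le hne ?_) ?_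
  · rintro _ ⟨p, hp, rfl⟩; exact (key p hp).le
  · refine le_of_forall_pos_le_add ?_
    intro ε hε
    set j := max 2 (Nat.ceil (2/ε)) with hjdef
    have hj2 : 2 ≤ j := le_max_left _ _
    have hjc : (2:ℝ)/ε ≤ (j:ℝ) := by
      refine le_trans (Nat.le_ceil _) ?_
      exact_mod_cast le_max_right 2 (Nat.ceil (2/ε))
    have hjR : (0:ℝ) < (j:ℝ) := by positivity
    set p := min (ε/(2*(j:ℝ))) (1/2) with hpdef
    have hp0 : 0 < p := lt_min (by positivity) (by norm_num)
    have hp1 : p < 1 := lt_of_le_of_lt (min_le_right _ _) (by norm_num)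
    have hmem : p ∈ Set.Ioo (0:ℝ) 1 := ⟨hp0, hp1⟩
    have hE : 1/(k:ℝ) ≤ E k p := by
      rcases eq_or_lt_of_le hk1 with rfl | h2
      · rw [E_one]; norm_num
      · rw [E_ne (by omega)]
        have : (1-p)^k ≤ 1 := pow_le_one₀ (by linarith) (by linarith)
        linarith
    have hEj : E j p ≤ (j:ℝ)*p + 1/(j:ℝ) := by
      rw [E_ne (by omega)]
      have hB := one_add_mul_le_pow (show (-2:ℝ) ≤ -p by linarith) j
      have heq : ((1:ℝ) + -p) = 1 - p := by ring
      rw [heq] at hB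
      have hb : 1 - (j:ℝ)*p ≤ (1-p)^j := by linarith [hB]
      linarith
    have hEstar : Estar p ≤ E j p := estar_le hp0 hp1 ⟨j, by omega⟩
    have hjp : (j:ℝ)*p ≤ ε/2 := by
      have h1 : p ≤ ε/(2*(j:ℝ)) := min_le_left _ _
      have h2 : (j:ℝ)*p ≤ (j:ℝ) * (ε/(2*(j:ℝ))) :=
        mul_le_mul_of_nonneg_left h1 hjR.le
      have h3 : (j:ℝ) * (ε/(2*(j:ℝ))) = ε/2 := by field_simp
      linarith
    have hjinv : 1/(j:ℝ) ≤ ε/2 := by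
      rw [div_le_div_iff₀ hjR (by norm_num)]
      have h1 := mul_le_mul_of_nonneg_left hjc hε.le
      rw [mul_div_cancel₀ _ (ne_of_gt hε)] at h1
      nlinarith
    have hL : 1/(k:ℝ) - ε ≤ L k p := by
      rw [L]; push_cast; linarith
    have hmem2 : L k p ∈ L k '' Set.Ioo (0:ℝ) 1 := ⟨p, hmem, rfl⟩
    have := le_csSup hbdd hmem2
    push_cast
    linarith
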